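/- Let τ > 0 and let u be a real number with u ≤ τ. Then e^{|u|/2} − 1 − |u|/2 ≤ κ(τ) · (1 − e^{-u/2})²/2, where κ(τ) = 2(e^{τ/2} − 1 − τ/2)/(1 − e^{-τ/2})². -/

import Mathlib

private lemma mono_helper {c : ℝ} {f f' : ℝ → ℝ} (hf : ∀ t, HasDerivAt f (f' t) t)
    (h0 : ∀ t, c ≤ t → 0 ≤ f' t) : ∀ x, c ≤ x → f c ≤ f x := by
  intro x hx
  have hmono : MonotoneOn f (Set.Ici c) := by
    apply monotoneOn_of_deriv_nonneg (convex_Ici c)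
    · exact fun t _ => (hf t).continuousAt.continuousWithinAt
    · intro t ht
      exact ((hf t).differentiableAt).differentiableWithinAt
    · intro t ht
      rw [interior_Ici] at ht
      rw [(hf t).deriv]
      exact h0 t (le_of_lt ht)
  exact hmono Set.self_mem_Ici hx hx

private lemma keyA (x : ℝ) (hx : 0 ≤ x) :
    2 * (Real.exp x - 1 - x) ≤ (Real.exp x - 1) ^ 2 := by
  have hf : ∀ t : ℝ, HasDerivAt (fun s => (Real.exp s - 1) ^ 2 - 2 * (Real.exp s - 1 - s))
      (2 * (Real.exp t - 1) ^ 2) t := by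
    intro t
    have h1 : HasDerivAt (fun s => Real.exp s - 1) (Real.exp t) t :=
      (Real.hasDerivAt_exp t).sub_const 1
    have h2 := h1.pow 2
    have h3 : HasDerivAt (fun s => Real.exp s - 1 - s) (Real.exp t - 1) t := by
      exact h1.sub (hasDerivAt_id' t)
    have h4 := h2.sub (h3.const_mul 2)
    exact h4.congr_deriv (by push_cast; ring)
  have := mono_helper hf (fun t _ => by positivity) x hx
  simp [Real.exp_zero] at this
  linarith

private lemma quad (y : ℝ) (hy : 0 ≤ y) : 1 + y + y ^ 2 / 2 ≤ Real.exp y := by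
  have hf : ∀ t : ℝ, HasDerivAt (fun s => Real.exp s - 1 - s - s ^ 2 / 2)
      (Real.exp t - 1 - t) t := by
    intro t
    have h1 : HasDerivAt (fun s : ℝ => Real.exp s - 1 - s) (Real.exp t - 1) t := by
      exact ((Real.hasDerivAt_exp t).sub_const 1).sub (hasDerivAt_id' t)
    have h2 : HasDerivAt (fun s : ℝ => s ^ 2 / 2) t t := by
      have := (hasDerivAt_pow 2 t).div_const 2
      simpa using this
    have h4 := h1.sub h2
    exact h4
  have h0 : ∀ t, (0:ℝ) ≤ t → 0 ≤ Real.exp t - 1 - t := by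
    intro t ht
    have := Real.add_one_le_exp t
    linarith
  have := mono_helper hf h0 y hy
  simp [Real.exp_zero] at this
  linarith

private lemma keyB (x y : ℝ) (hx : 0 ≤ x) (hxy : x ≤ y) :
    (Real.exp x - 1 - x) * (1 - Real.exp (-y)) ^ 2 ≤
      (Real.exp y - 1 - y) * (1 - Real.exp (-x)) ^ 2 := by
  set C : ℝ := (1 - Real.exp (-x)) ^ 2 with hC
  set K : ℝ := Real.exp x - 1 - x with hK
  have hf : ∀ t : ℝ, HasDerivAt (fun s => (Real.exp s - 1 - s) * C - K * (1 - Real.exp (-s)) ^ 2)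
      ((Real.exp t - 1) * C - K * (2 * (1 - Real.exp (-t)) * Real.exp (-t))) t := by
    intro t
    have h1 : HasDerivAt (fun s : ℝ => Real.exp s - 1 - s) (Real.exp t - 1) t := by
      exact ((Real.hasDerivAt_exp t).sub_const 1).sub (hasDerivAt_id' t)
    have h2 : HasDerivAt (fun s : ℝ => Real.exp (-s)) (-Real.exp (-t)) t := by
      exact ((Real.hasDerivAt_exp (-t)).comp t ((hasDerivAt_id' t).neg)).congr_deriv (by ring)
    have h3 : HasDerivAt (fun s : ℝ => 1 - Real.exp (-s)) (Real.exp (-t)) t := by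
      simpa using h2.const_sub 1
    have h4 := h3.pow 2
    have h5 := (h1.mul_const C).sub (h4.const_mul K)
    exact h5.congr_deriv (by push_cast; ring)
  have h0 : ∀ t, x ≤ t →
      0 ≤ (Real.exp t - 1) * C - K * (2 * (1 - Real.exp (-t)) * Real.exp (-t)) := by
    intro t ht
    have ht0 : (0:ℝ) ≤ t := le_trans hx ht
    have hA : (1:ℝ) ≤ Real.exp x := Real.one_le_exp hx
    have hB : Real.exp x ≤ Real.exp t := Real.exp_le_exp.mpr ht
    have hA' : Real.exp (-x) ≤ 1 := Real.exp_le_one_iff.mpr (by linarith)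
    have hB'pos : 0 < Real.exp (-t) := Real.exp_pos _
    have hB'A' : Real.exp (-t) ≤ Real.exp (-x) := Real.exp_le_exp.mpr (by linarith)
    have hAA' : Real.exp x * Real.exp (-x) = 1 := by
      rw [← Real.exp_add]; simp
    have hBB' : Real.exp t * Real.exp (-t) = 1 := by
      rw [← Real.exp_add]; simp
    have hkA := keyA x hx
    -- identities: 1 - exp(-x) = exp(-x)*(exp x - 1), etc.
    have hid1 : 1 - Real.exp (-x) = Real.exp (-x) * (Real.exp x - 1) := by
      nlinarith [hAA']
    have hid2 : 1 - Real.exp (-t) = Real.exp (-t) * (Real.exp t - 1) := by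
      nlinarith [hBB']
    have hKC : 2 * K ≤ (Real.exp x - 1) ^ 2 := by rw [hK]; exact hkA
    have hKpos : 0 ≤ K := by
      have := Real.add_one_le_exp x
      rw [hK]; linarith
    rw [hC, hid1, hid2]
    have key : (Real.exp x - 1) ^ 2 * (Real.exp (-t) * (Real.exp t - 1) * Real.exp (-t)) ≤
        (Real.exp t - 1) * (Real.exp (-x) * (Real.exp x - 1)) ^ 2 := by
      have h1 : 0 ≤ (Real.exp x - 1) ^ 2 * (Real.exp t - 1) := by nlinarith
      have h2 : Real.exp (-t) * Real.exp (-t) ≤ Real.exp (-x) * Real.exp (-x) := by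
        nlinarith
      nlinarith [h1, h2]
    have hnn : 0 ≤ Real.exp (-t) * (Real.exp t - 1) * Real.exp (-t) := by nlinarith
    nlinarith [mul_le_mul_of_nonneg_right hKC hnn]
  have := mono_helper hf h0 y hxy
  simp only [hK, hC] at this ⊢
  nlinarith [this]

theorem stmt7 (τ u : ℝ) (hτ : 0 < τ) (hu : u ≤ τ) :
    Real.exp (|u| / 2) - 1 - |u| / 2 ≤
      (2 * (Real.exp (τ / 2) - 1 - τ / 2) / (1 - Real.exp (-τ / 2)) ^ 2) *
        (1 - Real.exp (-u / 2)) ^ 2 / 2 := by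
  set y : ℝ := τ / 2 with hy
  have hy0 : 0 < y := by positivity
  have hDpos : 0 < (1 - Real.exp (-τ / 2)) ^ 2 := by
    have h : Real.exp (-τ / 2) < 1 := by
      rw [Real.exp_lt_one_iff]; linarith
    have h2 : 0 < 1 - Real.exp (-τ / 2) := by linarith
    exact pow_pos h2 2
  have hNτ : -τ / 2 = -(τ / 2) := by ring
  set N : ℝ := Real.exp (τ / 2) - 1 - τ / 2 with hN
  set D : ℝ := (1 - Real.exp (-τ / 2)) ^ 2 with hD
  rcases le_or_gt u 0 with hu0 | hu0
  · -- case u ≤ 0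
    have habs : |u| = -u := abs_of_nonpos hu0
    have hx0 : 0 ≤ -u / 2 := by linarith
    have hkA := keyA (-u / 2) hx0
    -- κ(τ) ≥ 1 : D ≤ 2N
    have h1 : 1 - Real.exp (-y) ≤ y := by
      have := Real.add_one_le_exp (-y)
      linarith
    have h2 : 0 ≤ 1 - Real.exp (-y) := by
      have : Real.exp (-y) ≤ 1 := Real.exp_le_one_iff.mpr (by linarith)
      linarith
    have hDy : D ≤ y ^ 2 := by
      rw [hD, hNτ, ← hy]
      nlinarith
    have h2N : y ^ 2 ≤ 2 * N := by
      have := quad y (le_of_lt hy0)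
      rw [hN, ← hy]
      linarith
    have hD2N : D ≤ 2 * N := le_trans hDy h2N
    have hsq : (1 - Real.exp (-u / 2)) ^ 2 = (Real.exp (-u / 2) - 1) ^ 2 := by ring
    have hLHS : Real.exp (|u| / 2) - 1 - |u| / 2 ≤ (Real.exp (-u / 2) - 1) ^ 2 / 2 := by
      rw [habs]
      have : |u| / 2 = -u / 2 := by rw [habs]
      nlinarith [hkA]
    have hfrac : (1:ℝ) ≤ 2 * N / D := by
      rw [le_div_iff₀ hDpos]
      linarith
    calc Real.exp (|u| / 2) - 1 - |u| / 2 ≤ (Real.exp (-u / 2) - 1) ^ 2 / 2 := hLHS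
      _ = 1 * ((Real.exp (-u / 2) - 1) ^ 2) / 2 := by ring
      _ ≤ (2 * N / D) * ((Real.exp (-u / 2) - 1) ^ 2) / 2 := by
          have := sq_nonneg (Real.exp (-u / 2) - 1)
          gcongr
      _ = (2 * N / D) * (1 - Real.exp (-u / 2)) ^ 2 / 2 := by rw [hsq]
  · -- case 0 < u ≤ τ
    have habs : |u| = u := abs_of_pos hu0
    have hB := keyB (u / 2) (τ / 2) (by linarith) (by linarith)
    have hru : -(u / 2) = -u / 2 := by ring
    have hrτ : -(τ / 2) = -τ / 2 := by ring
    rw [hru, hrτ] at hB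
    rw [habs]
    have heq : (2 * N / D) * (1 - Real.exp (-u / 2)) ^ 2 / 2
        = N * (1 - Real.exp (-u / 2)) ^ 2 / D := by
      field_simp
    rw [heq, le_div_iff₀ hDpos]
    rw [hN, hD]
    linarith [hB]
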